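/- Let I ⊆ [n-1] and a ∈ [2, n-1] with [a-2, a+1] ∩ I = ∅. Then Σ (-1)^{ℓ(σ)} x^{L(σ)} = 0 where the sum runs over σ ∈ S_n^I with σ(a) = n, and likewise the sum over σ ∈ S_n^I with σ(a) = 1 vanishes. -/

import Mathlib

open Finset Polynomial
open scoped Classical

/-- Number of inversions (Coxeter length) of a permutation of `Fin n`. -/
def ellA (n : ℕ) (σ : Equiv.Perm (Fin n)) : ℕ :=
  (Finset.univ.filter (fun p : Fin n × Fin n => p.1 < p.2 ∧ σ p.2 < σ p.1)).card

/-- The odd length: inversions `(i,j)` with `i ≢ j (mod 2)`. -/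
def oddLA (n : ℕ) (σ : Equiv.Perm (Fin n)) : ℕ :=
  (Finset.univ.filter (fun p : Fin n × Fin n =>
    p.1 < p.2 ∧ σ p.2 < σ p.1 ∧ (p.1 : ℕ) % 2 ≠ (p.2 : ℕ) % 2)).card

/-- Membership in the right quotient `S_n^I` (generators indexed 1-based by `I ⊆ [n-1]`):
no descent at any position of `I`. Position `k ∈ I` (1-based) compares the values at the
0-based positions `k-1` and `k`. -/
def inQuotA (n : ℕ) (I : Finset ℕ) (σ : Equiv.Perm (Fin n)) : Prop :=
  ∀ i j : Fin n, (j : ℕ) = (i : ℕ) + 1 → (i : ℕ) + 1 ∈ I → σ i < σ j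

/-- Even chessboard elements: `i + σ(i)` is even for all `i` (0- or 1-based is equivalent). -/
def chessPlus (n : ℕ) (σ : Equiv.Perm (Fin n)) : Prop :=
  ∀ i : Fin n, ((i : ℕ) + (σ i : ℕ)) % 2 = 0

/-- Odd chessboard elements: `i + σ(i)` is odd for all `i`. -/
def chessMinus (n : ℕ) (σ : Equiv.Perm (Fin n)) : Prop :=
  ∀ i : Fin n, ((i : ℕ) + (σ i : ℕ)) % 2 = 1

/-- Signed generating function `∑ (-1)^{ℓ(σ)} x^{L(σ)}` over the permutations satisfying `P`. -/
noncomputable def gfA (n : ℕ) (P : Equiv.Perm (Fin n) → Prop) : Polynomial ℤ :=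
  ∑ σ : Equiv.Perm (Fin n),
    if P σ then (-1 : Polynomial ℤ) ^ (ellA n σ) * X ^ (oddLA n σ) else 0

section Aux


variable {n : ℕ}

/-- The pair map implementing the bijection on inversion sets. -/
def gmapA (p q mid : Fin n) (pr : Fin n × Fin n) : Fin n × Fin n :=
  if pr.1 = mid ∨ pr.2 = mid then pr else (Equiv.swap p q pr.1, Equiv.swap p q pr.2)

lemma tau_parity {p q : Fin n} (hq : (q : ℕ) = (p : ℕ) + 2) (x : Fin n) :
    ((Equiv.swap p q x : Fin n) : ℕ) % 2 = (x : ℕ) % 2 := by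
  rw [Equiv.swap_apply_def]
  split_ifs with h1 h2
  · subst h1; omega
  · subst h2; omega
  · rfl

lemma tau_fix_mid {p q mid : Fin n} (hq : (q : ℕ) = (p : ℕ) + 2)
    (hmid : (mid : ℕ) = (p : ℕ) + 1) : Equiv.swap p q mid = mid := by
  apply Equiv.swap_apply_of_ne_of_ne <;> (intro h; rw [Fin.ext_iff] at h; omega)

lemma tau_lt {p q mid : Fin n} (hq : (q : ℕ) = (p : ℕ) + 2)
    (hmid : (mid : ℕ) = (p : ℕ) + 1) {i j : Fin n} (hij : i < j)
    (hi : i ≠ mid) (hj : j ≠ mid) (hpq : ¬(i = p ∧ j = q)) :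
    Equiv.swap p q i < Equiv.swap p q j := by
  rcases not_and_or.mp hpq with h | h <;>
  · rw [Equiv.swap_apply_def, Equiv.swap_apply_def] <;>
    split_ifs <;>
    simp only [Fin.lt_def, Fin.ext_iff] at * <;> omega

lemma gmap_mem {p q mid : Fin n} (hq : (q : ℕ) = (p : ℕ) + 2)
    (hmid : (mid : ℕ) = (p : ℕ) + 1) (σ : Equiv.Perm (Fin n))
    (Q : Fin n × Fin n → Prop)
    (hcomp : (∀ x, x ≠ mid → σ x < σ mid) ∨ (∀ x, x ≠ mid → σ mid < σ x))
    (hQτ : ∀ x : Fin n × Fin n, x.1 < x.2 → Equiv.swap p q x.1 < Equiv.swap p q x.2 →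
      (Q (Equiv.swap p q x.1, Equiv.swap p q x.2) ↔ Q x))
    (hQpq : ¬ Q (p, q))
    {pr : Fin n × Fin n} (h1 : pr.1 < pr.2)
    (h2 : σ (Equiv.swap p q pr.2) < σ (Equiv.swap p q pr.1)) (h3 : Q pr) :
    (gmapA p q mid pr).1 < (gmapA p q mid pr).2 ∧
      σ (gmapA p q mid pr).2 < σ (gmapA p q mid pr).1 ∧ Q (gmapA p q mid pr) := by
  have hpm : p ≠ mid := by intro h; rw [Fin.ext_iff] at h; omega
  have hqm : q ≠ mid := by intro h; rw [Fin.ext_iff] at h; omega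
  have hτm : Equiv.swap p q mid = mid := tau_fix_mid hq hmid
  unfold gmapA
  by_cases hc : pr.1 = mid ∨ pr.2 = mid
  · rw [if_pos hc]
    refine ⟨h1, ?_, h3⟩
    rcases hc with hc | hc
    · -- pr.1 = mid
      rw [hc] at h1 ⊢
      rw [hc, hτm] at h2
      have h2p : pr.2 ≠ p := by
        intro h; rw [h, Fin.lt_def] at h1; omega
      by_cases h2q : pr.2 = q
      · rw [h2q, Equiv.swap_apply_right] at h2
        rcases hcomp with hc' | hc'
        · rw [h2q]; exact hc' q hqm
        · exact absurd h2 (asymm (hc' p hpm))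
      · rwa [Equiv.swap_apply_of_ne_of_ne h2p h2q] at h2
    · -- pr.2 = mid
      rw [hc] at h1 ⊢
      rw [hc, hτm] at h2
      have h1q : pr.1 ≠ q := by
        intro h; rw [h, Fin.lt_def] at h1; omega
      by_cases h1p : pr.1 = p
      · rw [h1p, Equiv.swap_apply_left] at h2
        rcases hcomp with hc' | hc'
        · exact absurd h2 (asymm (hc' q hqm))
        · rw [h1p]; exact hc' p hpm
      · rwa [Equiv.swap_apply_of_ne_of_ne h1p h1q] at h2
  · rw [if_neg hc]
    push_neg at hc
    have hne : ¬(pr.1 = p ∧ pr.2 = q) := by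
      rintro ⟨hh1, hh2⟩
      exact hQpq (by rw [← hh1, ← hh2]; exact h3)
    have hlt := tau_lt hq hmid h1 hc.1 hc.2 hne
    exact ⟨hlt, h2, (hQτ pr h1 hlt).mpr h3⟩

lemma gmap_invol {p q mid : Fin n} (hq : (q : ℕ) = (p : ℕ) + 2)
    (hmid : (mid : ℕ) = (p : ℕ) + 1) (pr : Fin n × Fin n) :
    gmapA p q mid (gmapA p q mid pr) = pr := by
  unfold gmapA
  by_cases hc : pr.1 = mid ∨ pr.2 = mid
  · rw [if_pos hc, if_pos hc]
  · rw [if_neg hc]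
    push_neg at hc
    have hτm : Equiv.swap p q mid = mid := tau_fix_mid hq hmid
    have h1 : Equiv.swap p q pr.1 ≠ mid := by
      intro h; exact hc.1 (by simpa [hτm] using congrArg (Equiv.swap p q) h)
    have h2 : Equiv.swap p q pr.2 ≠ mid := by
      intro h; exact hc.2 (by simpa [hτm] using congrArg (Equiv.swap p q) h)
    rw [if_neg (by simpa using not_or.mpr ⟨h1, h2⟩)]
    simp

lemma comp_comp {p q : Fin n} (σ : Equiv.Perm (Fin n)) {mid : Fin n}
    (hq : (q : ℕ) = (p : ℕ) + 2) (hmid : (mid : ℕ) = (p : ℕ) + 1)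
    (hcomp : (∀ x, x ≠ mid → σ x < σ mid) ∨ (∀ x, x ≠ mid → σ mid < σ x)) :
    (∀ x, x ≠ mid → (σ * Equiv.swap p q) x < (σ * Equiv.swap p q) mid) ∨
      (∀ x, x ≠ mid → (σ * Equiv.swap p q) mid < (σ * Equiv.swap p q) x) := by
  have hτm : Equiv.swap p q mid = mid := tau_fix_mid hq hmid
  have key : ∀ x : Fin n, x ≠ mid → Equiv.swap p q x ≠ mid := by
    intro x hx h
    exact hx (by simpa [hτm] using congrArg (Equiv.swap p q) h)
  rcases hcomp with h | h
  · exact Or.inl fun x hx => by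
      simpa [Equiv.Perm.mul_apply, hτm] using h _ (key x hx)
  · exact Or.inr fun x hx => by
      simpa [Equiv.Perm.mul_apply, hτm] using h _ (key x hx)

lemma card_key {p q mid : Fin n} (hq : (q : ℕ) = (p : ℕ) + 2)
    (hmid : (mid : ℕ) = (p : ℕ) + 1) (σ : Equiv.Perm (Fin n))
    (Q : Fin n × Fin n → Prop) [DecidablePred Q]
    (hcomp : (∀ x, x ≠ mid → σ x < σ mid) ∨ (∀ x, x ≠ mid → σ mid < σ x))
    (hQτ : ∀ x : Fin n × Fin n, x.1 < x.2 → Equiv.swap p q x.1 < Equiv.swap p q x.2 →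
      (Q (Equiv.swap p q x.1, Equiv.swap p q x.2) ↔ Q x))
    (hQpq : ¬ Q (p, q)) :
    (Finset.univ.filter (fun pr : Fin n × Fin n =>
        pr.1 < pr.2 ∧ (σ * Equiv.swap p q) pr.2 < (σ * Equiv.swap p q) pr.1 ∧ Q pr)).card =
    (Finset.univ.filter (fun pr : Fin n × Fin n =>
        pr.1 < pr.2 ∧ σ pr.2 < σ pr.1 ∧ Q pr)).card := by
  have hcomp' := comp_comp σ hq hmid hcomp
  apply Finset.card_nbij' (i := gmapA p q mid) (j := gmapA p q mid)
  · intro pr hpr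
    rw [Finset.mem_coe, Finset.mem_filter] at hpr ⊢
    obtain ⟨-, h1, h2, h3⟩ := hpr
    simp only [Equiv.Perm.mul_apply] at h2
    exact ⟨Finset.mem_univ _, gmap_mem hq hmid σ Q hcomp hQτ hQpq h1 h2 h3⟩
  · intro pr hpr
    rw [Finset.mem_coe, Finset.mem_filter] at hpr ⊢
    obtain ⟨-, h1, h2, h3⟩ := hpr
    have h2' : (σ * Equiv.swap p q) (Equiv.swap p q pr.2) <
        (σ * Equiv.swap p q) (Equiv.swap p q pr.1) := by
      simpa [Equiv.Perm.mul_apply] using h2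
    have := gmap_mem hq hmid (σ * Equiv.swap p q) Q hcomp' hQτ hQpq h1 h2' h3
    exact ⟨Finset.mem_univ _, this⟩
  · intro pr _; exact gmap_invol hq hmid pr
  · intro pr _; exact gmap_invol hq hmid pr

lemma oddLA_mul {p q mid : Fin n} (hq : (q : ℕ) = (p : ℕ) + 2)
    (hmid : (mid : ℕ) = (p : ℕ) + 1) (σ : Equiv.Perm (Fin n))
    (hcomp : (∀ x, x ≠ mid → σ x < σ mid) ∨ (∀ x, x ≠ mid → σ mid < σ x)) :
    oddLA n (σ * Equiv.swap p q) = oddLA n σ := by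
  unfold oddLA
  exact @card_key n p q mid hq hmid σ
    (fun pr : Fin n × Fin n => (pr.1 : ℕ) % 2 ≠ (pr.2 : ℕ) % 2)
    (fun pr => instDecidableNot) hcomp
    (fun x _ _ => by simp only [tau_parity hq])
    (by simp only [not_not]; omega)

lemma ellA_split {p q : Fin n} (hplt : p < q) (σ : Equiv.Perm (Fin n)) :
    ellA n σ = (Finset.univ.filter (fun pr : Fin n × Fin n =>
        pr.1 < pr.2 ∧ σ pr.2 < σ pr.1 ∧ pr ≠ (p, q))).card
      + (if σ q < σ p then 1 else 0) := by
  classical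
  unfold ellA
  have h1 : (Finset.univ.filter (fun pr : Fin n × Fin n => pr.1 < pr.2 ∧ σ pr.2 < σ pr.1))
      = (Finset.univ.filter (fun pr : Fin n × Fin n =>
          pr.1 < pr.2 ∧ σ pr.2 < σ pr.1 ∧ pr ≠ (p, q)))
        ∪ (Finset.univ.filter (fun pr : Fin n × Fin n =>
          pr.1 < pr.2 ∧ σ pr.2 < σ pr.1 ∧ pr = (p, q))) := by
    ext pr
    simp only [Finset.mem_filter, Finset.mem_union, Finset.mem_univ, true_and]
    tauto
  have h2 : Disjoint (Finset.univ.filter (fun pr : Fin n × Fin n =>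
        pr.1 < pr.2 ∧ σ pr.2 < σ pr.1 ∧ pr ≠ (p, q)))
      (Finset.univ.filter (fun pr : Fin n × Fin n =>
        pr.1 < pr.2 ∧ σ pr.2 < σ pr.1 ∧ pr = (p, q))) := by
    rw [Finset.disjoint_left]
    intro pr hpr hpr'
    simp only [Finset.mem_filter] at hpr hpr'
    exact hpr.2.2.2 hpr'.2.2.2
  have h3 : (Finset.univ.filter (fun pr : Fin n × Fin n =>
      pr.1 < pr.2 ∧ σ pr.2 < σ pr.1 ∧ pr = (p, q))) =
      if σ q < σ p then {(p, q)} else ∅ := by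
    split_ifs with h
    · ext pr
      simp only [Finset.mem_filter, Finset.mem_univ, true_and, Finset.mem_singleton]
      constructor
      · rintro ⟨-, -, h⟩; exact h
      · rintro rfl; exact ⟨hplt, h, rfl⟩
    · ext pr
      simp only [Finset.mem_filter, Finset.mem_univ, true_and, Finset.notMem_empty,
        iff_false, not_and]
      rintro - hh rfl
      exact h hh
  rw [h1, Finset.card_union_of_disjoint h2, h3]
  congr 1
  split_ifs <;> simp

lemma hQtau_ne {p q mid : Fin n} (hq : (q : ℕ) = (p : ℕ) + 2)
    (hmid : (mid : ℕ) = (p : ℕ) + 1) :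
    ∀ x : Fin n × Fin n, x.1 < x.2 → Equiv.swap p q x.1 < Equiv.swap p q x.2 →
      ((Equiv.swap p q x.1, Equiv.swap p q x.2) ≠ (p, q) ↔ x ≠ (p, q)) := by
  intro x hx1 hx2
  apply iff_of_true
  · intro h
    have hA : Equiv.swap p q x.1 = p := congrArg Prod.fst h
    have hB : Equiv.swap p q x.2 = q := congrArg Prod.snd h
    have hA' : x.1 = q := by
      have := congrArg (Equiv.swap p q) hA
      rwa [Equiv.swap_apply_self, Equiv.swap_apply_left] at this
    have hB' : x.2 = p := by
      have := congrArg (Equiv.swap p q) hB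
      rwa [Equiv.swap_apply_self, Equiv.swap_apply_right] at this
    rw [hA', hB', Fin.lt_def] at hx1
    omega
  · intro h
    have hA : x.1 = p := congrArg Prod.fst h
    have hB : x.2 = q := congrArg Prod.snd h
    rw [hA, hB, Equiv.swap_apply_left, Equiv.swap_apply_right, Fin.lt_def] at hx2
    omega

lemma ellA_parity {p q mid : Fin n} (hq : (q : ℕ) = (p : ℕ) + 2)
    (hmid : (mid : ℕ) = (p : ℕ) + 1) (σ : Equiv.Perm (Fin n))
    (hcomp : (∀ x, x ≠ mid → σ x < σ mid) ∨ (∀ x, x ≠ mid → σ mid < σ x)) :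
    Odd (ellA n (σ * Equiv.swap p q) + ellA n σ) := by
  have hplt : p < q := by rw [Fin.lt_def]; omega
  have hne : σ p ≠ σ q := fun h => by
    have := σ.injective h
    rw [Fin.ext_iff] at this
    omega
  have hBB : (Finset.univ.filter (fun pr : Fin n × Fin n =>
        pr.1 < pr.2 ∧ (σ * Equiv.swap p q) pr.2 < (σ * Equiv.swap p q) pr.1 ∧
          pr ≠ (p, q))).card
      = (Finset.univ.filter (fun pr : Fin n × Fin n =>
        pr.1 < pr.2 ∧ σ pr.2 < σ pr.1 ∧ pr ≠ (p, q))).card :=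
    @card_key n p q mid hq hmid σ (fun pr => pr ≠ (p, q))
      (fun pr => instDecidableNot) hcomp (hQtau_ne hq hmid) (by simp)
  have e1 := ellA_split hplt (σ * Equiv.swap p q)
  have e2 := ellA_split hplt σ
  have hi : (if (σ * Equiv.swap p q) q < (σ * Equiv.swap p q) p then 1 else 0)
      + (if σ q < σ p then 1 else 0) = 1 := by
    simp only [Equiv.Perm.mul_apply, Equiv.swap_apply_left, Equiv.swap_apply_right]
    rcases hne.lt_or_gt with h | h
    · rw [if_pos h, if_neg (asymm h)]
    · rw [if_neg (asymm h), if_pos h]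
  rw [e1, e2, Nat.odd_iff]
  omega

lemma quot_mul {p q : Fin n} (I : Finset ℕ)
    (hfree : ∀ k ∈ I, k < (p : ℕ) ∨ (p : ℕ) + 3 < k)
    (hq : (q : ℕ) = (p : ℕ) + 2) (σ : Equiv.Perm (Fin n))
    (h : inQuotA n I σ) : inQuotA n I (σ * Equiv.swap p q) := by
  intro i j hji hkI
  have hk := hfree _ hkI
  have hip : i ≠ p := by intro hh; rw [Fin.ext_iff] at hh; omega
  have hiq : i ≠ q := by intro hh; rw [Fin.ext_iff] at hh; omega
  have hjp : j ≠ p := by intro hh; rw [Fin.ext_iff] at hh; omega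
  have hjq : j ≠ q := by intro hh; rw [Fin.ext_iff] at hh; omega
  have e1 : (σ * Equiv.swap p q) i = σ i := by
    rw [Equiv.Perm.mul_apply, Equiv.swap_apply_of_ne_of_ne hip hiq]
  have e2 : (σ * Equiv.swap p q) j = σ j := by
    rw [Equiv.Perm.mul_apply, Equiv.swap_apply_of_ne_of_ne hjp hjq]
  rw [e1, e2]
  exact h i j hji hkI

lemma negpow (a b : ℕ) (h : Odd (a + b)) :
    (-1 : Polynomial ℤ) ^ a = -(-1 : Polynomial ℤ) ^ b := by
  rcases Nat.even_or_odd a with ha | ha <;> rcases Nat.even_or_odd b with hb | hb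
  · exact absurd (ha.add hb) (Nat.not_even_iff_odd.mpr h)
  · rw [ha.neg_one_pow, hb.neg_one_pow, neg_neg]
  · rw [ha.neg_one_pow, hb.neg_one_pow]
  · exact absurd (ha.add_odd hb) (Nat.not_even_iff_odd.mpr h)

lemma main_aux (n : ℕ) (I : Finset ℕ) (p q mid v : Fin n)
    (hq : (q : ℕ) = (p : ℕ) + 2) (hmid : (mid : ℕ) = (p : ℕ) + 1)
    (hv : (∀ w : Fin n, w ≠ v → w < v) ∨ (∀ w : Fin n, w ≠ v → v < w))
    (hfree : ∀ k ∈ I, k < (p : ℕ) ∨ (p : ℕ) + 3 < k) :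
    gfA n (fun σ => inQuotA n I σ ∧ σ mid = v) = 0 := by
  have hτm : Equiv.swap p q mid = mid := tau_fix_mid hq hmid
  have hinvol : ∀ σ : Equiv.Perm (Fin n),
      (σ * Equiv.swap p q) * Equiv.swap p q = σ := by
    intro σ; rw [mul_assoc, Equiv.swap_mul_self, mul_one]
  have hmv : ∀ σ : Equiv.Perm (Fin n), (σ * Equiv.swap p q) mid = σ mid := by
    intro σ; rw [Equiv.Perm.mul_apply, hτm]
  have hPiff : ∀ σ : Equiv.Perm (Fin n), (inQuotA n I σ ∧ σ mid = v) →
      (inQuotA n I (σ * Equiv.swap p q) ∧ (σ * Equiv.swap p q) mid = v) := by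
    intro σ hP
    exact ⟨quot_mul I hfree hq σ hP.1, by rw [hmv]; exact hP.2⟩
  unfold gfA
  apply Finset.sum_ninvolution (g := fun σ => σ * Equiv.swap p q)
  · intro σ
    by_cases hP : inQuotA n I σ ∧ σ mid = v
    · rw [if_pos hP, if_pos (hPiff σ hP)]
      have hcomp : (∀ x, x ≠ mid → σ x < σ mid) ∨ (∀ x, x ≠ mid → σ mid < σ x) := by
        rcases hv with hv | hv
        · left
          intro x hx
          rw [hP.2]
          exact hv (σ x) (fun hh => hx (σ.injective (by rw [hh, hP.2])))
        · right
          intro x hx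
          rw [hP.2]
          exact hv (σ x) (fun hh => hx (σ.injective (by rw [hh, hP.2])))
      have hL := oddLA_mul hq hmid σ hcomp
      have hodd := ellA_parity hq hmid σ hcomp
      rw [hL, negpow _ _ hodd]
      ring
    · rw [if_neg hP, if_neg (fun h => hP (by
        have := hPiff _ h
        rwa [hinvol σ] at this))]
      simp
  · intro σ _ heq
    have h1 : Equiv.swap p q = 1 := mul_left_cancel (a := σ) (by rw [mul_one]; exact heq)
    have := congrArg (fun e => e p) h1
    simp only [Equiv.swap_apply_left, Equiv.Perm.one_apply] at this
    rw [Fin.ext_iff] at this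
    omega
  · intro σ; exact Finset.mem_univ _
  · intro σ; exact hinvol σ

end Aux

/-- Lemma 3.2. Let `I ⊆ [n-1]`, `a ∈ [2,n-1]` with `[a-2,a+1] ∩ I = ∅`.
Then the signed generating functions over `{σ ∈ S_n^I : σ(a) = n}` and over
`{σ ∈ S_n^I : σ(a) = 1}` both vanish. (Positions and values are 1-based; in the 0-based
model the position is `a-1`, the value `n` is `n-1` and the value `1` is `0`.) -/
theorem statement4 (n : ℕ) (I : Finset ℕ) (hI : I ⊆ Finset.Icc 1 (n - 1))
    (a : ℕ) (ha : 2 ≤ a) (ha' : a ≤ n - 1)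
    (hdisj : ∀ j, a - 2 ≤ j → j ≤ a + 1 → j ∉ I) :
    gfA n (fun σ => inQuotA n I σ ∧
        σ ⟨a - 1, by omega⟩ = ⟨n - 1, by omega⟩) = 0 ∧
    gfA n (fun σ => inQuotA n I σ ∧
        σ ⟨a - 1, by omega⟩ = ⟨0, by omega⟩) = 0 := by
  have hn : 3 ≤ n := by omega
  have hfree : ∀ k ∈ I, k < ((⟨a - 2, by omega⟩ : Fin n) : ℕ) ∨
      ((⟨a - 2, by omega⟩ : Fin n) : ℕ) + 3 < k := by
    intro k hk
    simp only
    by_contra hcon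
    push_neg at hcon
    exact hdisj k (by omega) (by omega) hk
  constructor
  · apply main_aux n I ⟨a - 2, by omega⟩ ⟨a, by omega⟩ ⟨a - 1, by omega⟩ ⟨n - 1, by omega⟩
      (by simp only; omega) (by simp only; omega) ?_ hfree
    left
    intro w hw
    rw [Fin.lt_def]
    rw [Ne, Fin.ext_iff] at hw
    simp only at hw ⊢
    have := w.isLt
    omega
  · apply main_aux n I ⟨a - 2, by omega⟩ ⟨a, by omega⟩ ⟨a - 1, by omega⟩ ⟨0, by omega⟩
      (by simp only; omega) (by simp only; omega) ?_ hfree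
    right
    intro w hw
    rw [Fin.lt_def]
    rw [Ne, Fin.ext_iff] at hw
    simp only at hw ⊢
    omega
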